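/- Let A be a commutative integral domain and f₁,…,fₙ ∈ A. Then the ideal of inertia forms TF_{(Z)}((f₁−T₁Z, …, fₙ−TₙZ)) is a prime ideal of the polynomial ring A[T₁,…,Tₙ,Z]. -/

import Mathlib

/-- The ideal of inertia forms (Trägheitsformen) of `I` with respect to `J`. -/
noncomputable def inertiaForms {R : Type*} [CommRing R] (J I : Ideal R) : Ideal R :=
  ⨆ n : ℕ, I.colon ((J ^ n : Ideal R) : Set R)

/-- The ideal `(f₁ - T₁Z, …, fₙ - TₙZ)` of `A[T₁,…,Tₙ][Z]`. -/
noncomputable def fTZIdeal {A : Type*} [CommRing A] {n : ℕ} (f : Fin n → A) :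
    Ideal (Polynomial (MvPolynomial (Fin n) A)) :=
  Ideal.span (Set.range fun i =>
    Polynomial.C (MvPolynomial.C (f i)) - Polynomial.C (MvPolynomial.X i) * Polynomial.X)

namespace Statement3Aux
open Polynomial

variable {A : Type*} [CommRing A] [IsDomain A] {n : ℕ}

noncomputable def gHom (f : Fin n → A) :
    MvPolynomial (Fin n) A →+* FractionRing (Polynomial A) :=
  MvPolynomial.eval₂Hom ((algebraMap (Polynomial A) (FractionRing (Polynomial A))).comp Polynomial.C)
    fun i => algebraMap (Polynomial A) (FractionRing (Polynomial A)) (Polynomial.C (f i)) *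
      (algebraMap (Polynomial A) (FractionRing (Polynomial A)) Polynomial.X)⁻¹

noncomputable def φHom (f : Fin n → A) :
    Polynomial (MvPolynomial (Fin n) A) →+* FractionRing (Polynomial A) :=
  Polynomial.eval₂RingHom (gHom f)
    (algebraMap (Polynomial A) (FractionRing (Polynomial A)) Polynomial.X)

lemma iX_ne_zero :
    algebraMap (Polynomial A) (FractionRing (Polynomial A)) Polynomial.X ≠ 0 := by
  intro h
  exact Polynomial.X_ne_zero
    (IsFractionRing.injective (Polynomial A) (FractionRing (Polynomial A)) (by simpa using h))

lemma φ_I_le (f : Fin n → A) : fTZIdeal f ≤ RingHom.ker (φHom f) := by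
  refine Ideal.span_le.mpr ?_
  rintro x ⟨i, rfl⟩
  simp only [SetLike.mem_coe, RingHom.mem_ker, φHom, coe_eval₂RingHom]
  rw [eval₂_sub, eval₂_mul, eval₂_C, eval₂_C, eval₂_X]
  simp only [gHom, MvPolynomial.eval₂Hom_C, MvPolynomial.eval₂Hom_X']
  rw [mul_assoc, inv_mul_cancel₀ iX_ne_zero, mul_one, RingHom.comp_apply]
  ring

lemma φ_map_C (f : Fin n → A) (q : Polynomial A) :
    φHom f (q.map MvPolynomial.C) =
      algebraMap (Polynomial A) (FractionRing (Polynomial A)) q := by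
  simp only [φHom, coe_eval₂RingHom, eval₂_map]
  have h1 : (gHom (n := n) f).comp MvPolynomial.C
      = (algebraMap (Polynomial A) (FractionRing (Polynomial A))).comp Polynomial.C := by
    ext a
    simp [gHom]
  rw [h1]
  have := (Polynomial.hom_eval₂ q Polynomial.C
    (algebraMap (Polynomial A) (FractionRing (Polynomial A))) Polynomial.X).symm
  rw [this, Polynomial.eval₂_C_X]

lemma φ_X (f : Fin n → A) :
    φHom f Polynomial.X
      = algebraMap (Polynomial A) (FractionRing (Polynomial A)) Polynomial.X := by
  simp [φHom]

/-- Key lemma: multiplying a coefficient by a large power of `X` makes it congruent mod `I`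
to a constant-coefficient polynomial. -/
lemma L1 (f : Fin n → A) (t : MvPolynomial (Fin n) A) :
    ∃ (N : ℕ) (q : Polynomial A),
      Polynomial.X ^ N * Polynomial.C t - q.map MvPolynomial.C ∈ fTZIdeal f := by
  induction t using MvPolynomial.induction_on with
  | C a =>
      exact ⟨0, Polynomial.C a, by simp⟩
  | add p q hp hq =>
      obtain ⟨N₁, q₁, h₁⟩ := hp
      obtain ⟨N₂, q₂, h₂⟩ := hq
      have r1 : Polynomial.X ^ (max N₁ N₂ - N₁) * Polynomial.X ^ N₁
          = (Polynomial.X : Polynomial (MvPolynomial (Fin n) A)) ^ max N₁ N₂ := by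
        rw [← pow_add, Nat.sub_add_cancel (le_max_left _ _)]
      have r2 : Polynomial.X ^ (max N₁ N₂ - N₂) * Polynomial.X ^ N₂
          = (Polynomial.X : Polynomial (MvPolynomial (Fin n) A)) ^ max N₁ N₂ := by
        rw [← pow_add, Nat.sub_add_cancel (le_max_right _ _)]
      have h₁' : Polynomial.X ^ max N₁ N₂ * Polynomial.C p
          - (Polynomial.X ^ (max N₁ N₂ - N₁) * q₁).map MvPolynomial.C ∈ fTZIdeal f := by
        have e1 := Ideal.mul_mem_left (fTZIdeal f) (Polynomial.X ^ (max N₁ N₂ - N₁)) h₁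
        convert e1 using 1
        rw [Polynomial.map_mul, Polynomial.map_pow, Polynomial.map_X, ← r1]
        ring
      have h₂' : Polynomial.X ^ max N₁ N₂ * Polynomial.C q
          - (Polynomial.X ^ (max N₁ N₂ - N₂) * q₂).map MvPolynomial.C ∈ fTZIdeal f := by
        have e2 := Ideal.mul_mem_left (fTZIdeal f) (Polynomial.X ^ (max N₁ N₂ - N₂)) h₂
        convert e2 using 1
        rw [Polynomial.map_mul, Polynomial.map_pow, Polynomial.map_X, ← r2]
        ring
      refine ⟨max N₁ N₂, Polynomial.X ^ (max N₁ N₂ - N₁) * q₁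
        + Polynomial.X ^ (max N₁ N₂ - N₂) * q₂, ?_⟩
      have := Ideal.add_mem _ h₁' h₂'
      convert this using 1
      rw [map_add, Polynomial.map_add]
      ring
  | mul_X p i hp =>
      obtain ⟨N, q, h⟩ := hp
      refine ⟨N + 1, q * Polynomial.C (f i), ?_⟩
      have e1 : (Polynomial.C (MvPolynomial.C (f i))
          - Polynomial.C (MvPolynomial.X i) * Polynomial.X) ∈ fTZIdeal f :=
        Ideal.subset_span ⟨i, rfl⟩
      have e2 := Ideal.add_mem _
        (Ideal.mul_mem_left _ (Polynomial.C (MvPolynomial.C (f i))) h)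
        (Ideal.mul_mem_left _ (-(Polynomial.X ^ N * Polynomial.C p)) e1)
      convert e2 using 1
      rw [Polynomial.map_mul, Polynomial.map_C, map_mul]
      ring

lemma L2 (f : Fin n → A) (p : Polynomial (MvPolynomial (Fin n) A)) :
    ∃ (N : ℕ) (q : Polynomial A),
      Polynomial.X ^ N * p - q.map MvPolynomial.C ∈ fTZIdeal f := by
  induction p using Polynomial.induction_on' with
  | monomial k t =>
      obtain ⟨N, q, h⟩ := L1 f t
      refine ⟨N, q * Polynomial.X ^ k, ?_⟩
      have := Ideal.mul_mem_left (fTZIdeal f) (Polynomial.X ^ k) h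
      convert this using 1
      rw [Polynomial.map_mul, Polynomial.map_pow, Polynomial.map_X,
        ← Polynomial.C_mul_X_pow_eq_monomial]
      ring
  | add p q hp hq =>
      obtain ⟨N₁, q₁, h₁⟩ := hp
      obtain ⟨N₂, q₂, h₂⟩ := hq
      have r1 : Polynomial.X ^ (max N₁ N₂ - N₁) * Polynomial.X ^ N₁
          = (Polynomial.X : Polynomial (MvPolynomial (Fin n) A)) ^ max N₁ N₂ := by
        rw [← pow_add, Nat.sub_add_cancel (le_max_left _ _)]
      have r2 : Polynomial.X ^ (max N₁ N₂ - N₂) * Polynomial.X ^ N₂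
          = (Polynomial.X : Polynomial (MvPolynomial (Fin n) A)) ^ max N₁ N₂ := by
        rw [← pow_add, Nat.sub_add_cancel (le_max_right _ _)]
      have h₁' : Polynomial.X ^ max N₁ N₂ * p
          - (Polynomial.X ^ (max N₁ N₂ - N₁) * q₁).map MvPolynomial.C ∈ fTZIdeal f := by
        have e1 := Ideal.mul_mem_left (fTZIdeal f) (Polynomial.X ^ (max N₁ N₂ - N₁)) h₁
        convert e1 using 1
        rw [Polynomial.map_mul, Polynomial.map_pow, Polynomial.map_X, ← r1]
        ring
      have h₂' : Polynomial.X ^ max N₁ N₂ * q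
          - (Polynomial.X ^ (max N₁ N₂ - N₂) * q₂).map MvPolynomial.C ∈ fTZIdeal f := by
        have e2 := Ideal.mul_mem_left (fTZIdeal f) (Polynomial.X ^ (max N₁ N₂ - N₂)) h₂
        convert e2 using 1
        rw [Polynomial.map_mul, Polynomial.map_pow, Polynomial.map_X, ← r2]
        ring
      refine ⟨max N₁ N₂, Polynomial.X ^ (max N₁ N₂ - N₁) * q₁
        + Polynomial.X ^ (max N₁ N₂ - N₂) * q₂, ?_⟩
      have := Ideal.add_mem _ h₁' h₂'
      convert this using 1
      rw [Polynomial.map_add]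
      ring

lemma mem_inertiaForms_iff (f : Fin n → A) (p : Polynomial (MvPolynomial (Fin n) A)) :
    p ∈ inertiaForms (Ideal.span {(Polynomial.X : Polynomial (MvPolynomial (Fin n) A))})
        (fTZIdeal f)
      ↔ ∃ N : ℕ, Polynomial.X ^ N * p ∈ fTZIdeal f := by
  have hdir : Directed (· ≤ ·) fun N : ℕ =>
      (fTZIdeal f).colon ((Ideal.span {(Polynomial.X : Polynomial (MvPolynomial (Fin n) A))} ^ N :
        Ideal _) : Set _) := by
    intro a b
    refine ⟨max a b, Submodule.colon_mono le_rfl (Ideal.pow_le_pow_right (le_max_left a b)),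
      Submodule.colon_mono le_rfl (Ideal.pow_le_pow_right (le_max_right a b))⟩
  rw [inertiaForms, Submodule.mem_iSup_of_directed _ hdir]
  refine exists_congr fun N => ?_
  rw [Ideal.span_singleton_pow, Submodule.mem_colon_span_singleton, smul_eq_mul, mul_comm]

end Statement3Aux

/-- if `A` is an integral domain, then the ideal of inertia forms
`TF_{(Z)}((f₁-T₁Z,…,fₙ-TₙZ))` is a prime ideal of `A[T₁,…,Tₙ,Z]`. -/
theorem statement3 {A : Type*} [CommRing A] [IsDomain A] (n : ℕ) (f : Fin n → A) :
    (inertiaForms (Ideal.span {(Polynomial.X : Polynomial (MvPolynomial (Fin n) A))})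
      (fTZIdeal f)).IsPrime := by
  open Statement3Aux in
  have key : inertiaForms (Ideal.span {(Polynomial.X : Polynomial (MvPolynomial (Fin n) A))})
      (fTZIdeal f) = RingHom.ker (φHom f) := by
    ext p
    rw [mem_inertiaForms_iff, RingHom.mem_ker]
    constructor
    · rintro ⟨N, hN⟩
      have h0 : φHom f (Polynomial.X ^ N * p) = 0 := φ_I_le f hN
      rw [map_mul, map_pow, φ_X] at h0
      rcases mul_eq_zero.mp h0 with h | h
      · exact absurd h (pow_ne_zero _ iX_ne_zero)
      · exact h
    · intro hp
      obtain ⟨N, q, hNq⟩ := L2 f p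
      have h0 : φHom f (Polynomial.X ^ N * p - q.map MvPolynomial.C) = 0 := φ_I_le f hNq
      rw [map_sub, map_mul, map_pow, φ_X, φ_map_C, hp, mul_zero, zero_sub, neg_eq_zero] at h0
      have hq : q = 0 := IsFractionRing.injective (Polynomial A) (FractionRing (Polynomial A))
        (by simpa using h0)
      rw [hq, Polynomial.map_zero, sub_zero] at hNq
      exact ⟨N, hNq⟩
  rw [key]
  exact RingHom.ker_isPrime _
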